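/- Let (G, c) be a Max-2Lin_k instance with nonnegative edge weights x such that every inconsistent simple cycle of G has total weight at least 1. Then every closed walk in G whose label sum (the sum of the constants c along the walk) is nonzero in ZMod k has total weight at least 1, where edge weights are counted with multiplicity along the walk. -/

import Mathlib

open SimpleGraph

/-- The weight of a walk: the sum of the weights of its edges, counted with multiplicity. -/
def walkWeight {V : Type*} {G : SimpleGraph V} (x : Sym2 V → ℝ) {u v : V}
    (p : G.Walk u v) : ℝ :=
  (p.edges.map x).sum

/-- The label sum of a walk: `c_{v_0 v_1} + c_{v_1 v_2} + ⋯ + c_{v_{l-1} v_l}`. -/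
def walkSum {V : Type*} {k : ℕ} {G : SimpleGraph V} (c : V → V → ZMod k) {u v : V}
    (p : G.Walk u v) : ZMod k :=
  (p.darts.map (fun d => c d.fst d.snd)).sum

lemma walkSum_cons {V : Type*} {k : ℕ} {G : SimpleGraph V} (c : V → V → ZMod k)
    {u v w : V} (h : G.Adj u v) (p : G.Walk v w) :
    walkSum c (SimpleGraph.Walk.cons h p) = c u v + walkSum c p := by
  simp [walkSum, SimpleGraph.Walk.darts_cons]

lemma walkSum_append {V : Type*} {k : ℕ} {G : SimpleGraph V} (c : V → V → ZMod k)
    {u v w : V} (p : G.Walk u v) (q : G.Walk v w) :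
    walkSum c (p.append q) = walkSum c p + walkSum c q := by
  simp [walkSum, SimpleGraph.Walk.darts_append]

lemma walkWeight_cons {V : Type*} {G : SimpleGraph V} (x : Sym2 V → ℝ)
    {u v w : V} (h : G.Adj u v) (p : G.Walk v w) :
    walkWeight x (SimpleGraph.Walk.cons h p) = x s(u, v) + walkWeight x p := by
  simp [walkWeight, SimpleGraph.Walk.edges_cons]

lemma walkWeight_append {V : Type*} {G : SimpleGraph V} (x : Sym2 V → ℝ)
    {u v w : V} (p : G.Walk u v) (q : G.Walk v w) :
    walkWeight x (p.append q) = walkWeight x p + walkWeight x q := by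
  simp [walkWeight, SimpleGraph.Walk.edges_append]

lemma walkWeight_nonneg {V : Type*} {G : SimpleGraph V} {x : Sym2 V → ℝ}
    (hx : ∀ e ∈ G.edgeSet, 0 ≤ x e) {u v : V} (p : G.Walk u v) :
    0 ≤ walkWeight x p := by
  apply List.sum_nonneg
  intro a hmem
  obtain ⟨e, he, rfl⟩ := List.mem_map.mp hmem
  exact hx e (p.edges_subset_edgeSet he)

/-- A path from `w` to `v` containing the edge `s(v,w)` is a single edge. -/
lemma path_mem_edge_eq {V : Type*} {G : SimpleGraph V} {w v : V} (p : G.Walk w v)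
    (hn : p.support.Nodup) (he : s(v, w) ∈ p.edges) :
    ∃ (h : G.Adj w v), p = SimpleGraph.Walk.cons h SimpleGraph.Walk.nil := by
  induction p with
  | nil => simp at he
  | @cons w y v h' q ih =>
    rw [SimpleGraph.Walk.edges_cons, List.mem_cons] at he
    rw [SimpleGraph.Walk.support_cons, List.nodup_cons] at hn
    rcases he with heq | hmem
    · rw [Sym2.eq_iff] at heq
      rcases heq with ⟨rfl, rfl⟩ | ⟨rfl, -⟩
      · exact absurd h' (G.loopless.irrefl _)
      · -- y = v, q : Walk v v with nodup support
        cases q with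
        | nil => exact ⟨h', rfl⟩
        | cons h2 q2 =>
          exfalso
          rw [SimpleGraph.Walk.support_cons, List.nodup_cons] at hn
          exact hn.2.1 (by simpa using q2.end_mem_support)
    · exact absurd (q.snd_mem_support_of_mem_edges hmem) hn.1

/-- If every inconsistent simple cycle of a `Max-2Lin_k` instance has total weight at least 1
(with nonnegative edge weights), then every closed walk with nonzero label sum has total
weight at least 1. -/
theorem stmt14 {V : Type*} [Fintype V] {k : ℕ} (hk : 1 ≤ k) (G : SimpleGraph V)
    (c : V → V → ZMod k) (hc : ∀ u v, G.Adj u v → c v u = -c u v)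
    (x : Sym2 V → ℝ) (hx : ∀ e ∈ G.edgeSet, 0 ≤ x e)
    (hincons : ∀ (v : V) (C : G.Walk v v), C.IsCycle → walkSum c C ≠ 0 →
      1 ≤ walkWeight x C)
    (v : V) (W : G.Walk v v) (hW : walkSum c W ≠ 0) :
    1 ≤ walkWeight x W := by
  classical
  suffices H : ∀ n (u : V) (W : G.Walk u u), W.length ≤ n → walkSum c W ≠ 0 →
      1 ≤ walkWeight x W from H W.length v W le_rfl hW
  intro n
  induction n with
  | zero =>
    intro u W hl hs
    cases W with
    | nil => simp [walkSum] at hs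
    | cons h p => simp at hl
  | succ n ih =>
    intro u W hl hs
    cases W with
    | nil => simp [walkSum] at hs
    | @cons u w u h p =>
      by_cases hcyc : (SimpleGraph.Walk.cons h p).IsCycle
      · exact hincons _ _ hcyc hs
      by_cases hnd : p.support.Nodup
      · -- p is a path; since not a cycle, the edge s(u,w) lies on p, so W is a back-and-forth
        rw [SimpleGraph.Walk.cons_isCycle_iff] at hcyc
        push_neg at hcyc
        have he : s(u, w) ∈ p.edges := hcyc ((SimpleGraph.Walk.isPath_def p).mpr hnd)
        obtain ⟨hadj, rfl⟩ := path_mem_edge_eq p hnd he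
        rw [walkSum_cons, walkSum_cons, hc u w h] at hs
        simp [walkSum] at hs
      · -- p has a repeated vertex: split off a shorter closed walk
        obtain ⟨a, ha⟩ := List.exists_duplicate_iff_not_nodup.mpr hnd
        have hamem : a ∈ p.support := ha.mem
        have ha2 : 2 ≤ p.support.count a := List.duplicate_iff_two_le_count.mp ha
        have hspec := p.take_spec hamem
        have hc1 : (p.takeUntil a hamem).support.count a = 1 :=
          p.count_support_takeUntil_eq_one hamem
        have hsupp : p.support
            = (p.takeUntil a hamem).support ++ (p.dropUntil a hamem).support.tail := by
          conv_lhs => rw [← hspec]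
          rw [SimpleGraph.Walk.support_append]
        have har : a ∈ (p.dropUntil a hamem).support.tail := by
          by_contra hno
          have : p.support.count a = 1 := by
            rw [hsupp, List.count_append, hc1, List.count_eq_zero_of_not_mem hno]
          omega
        have hnnil : ¬ (p.dropUntil a hamem).Nil := by
          intro hnil
          rw [SimpleGraph.Walk.nil_iff_support_eq.mp hnil] at har
          simp at har
        obtain ⟨y, h2, r₂, hr⟩ := SimpleGraph.Walk.not_nil_iff.mp hnnil
        rw [hr] at hspec har
        rw [SimpleGraph.Walk.support_cons, List.tail_cons] at har
        have hspec2 := r₂.take_spec har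
        rw [← hspec2] at hspec
        -- W = cons h ((p.takeUntil a) ++ cons h2 (q₁ ++ q₂))
        set p₁ := p.takeUntil a hamem with hp₁
        set q₁ := r₂.takeUntil a har with hq₁
        set q₂ := r₂.dropUntil a har with hq₂
        have hWeq : (SimpleGraph.Walk.cons h p)
            = SimpleGraph.Walk.cons h (p₁.append (SimpleGraph.Walk.cons h2 (q₁.append q₂))) := by
          rw [hspec]
        have hsum : walkSum c (SimpleGraph.Walk.cons h p)
            = walkSum c (SimpleGraph.Walk.cons h (p₁.append q₂))
              + walkSum c (SimpleGraph.Walk.cons h2 q₁) := by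
          rw [hWeq]
          simp only [walkSum_cons, walkSum_append]
          abel
        have hwt : walkWeight x (SimpleGraph.Walk.cons h p)
            = walkWeight x (SimpleGraph.Walk.cons h (p₁.append q₂))
              + walkWeight x (SimpleGraph.Walk.cons h2 q₁) := by
          rw [hWeq]
          simp only [walkWeight_cons, walkWeight_append]
          ring
        have hlen : (SimpleGraph.Walk.cons h p).length
            = (SimpleGraph.Walk.cons h (p₁.append q₂)).length
              + (SimpleGraph.Walk.cons h2 q₁).length := by
          rw [hWeq]
          simp [SimpleGraph.Walk.length_cons, SimpleGraph.Walk.length_append]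
          omega
        have hl1 : (SimpleGraph.Walk.cons h (p₁.append q₂)).length ≤ n := by
          have := SimpleGraph.Walk.length_cons h2 q₁
          omega
        have hl2 : (SimpleGraph.Walk.cons h2 q₁).length ≤ n := by
          have := SimpleGraph.Walk.length_cons h (p₁.append q₂)
          omega
        by_cases hz : walkSum c (SimpleGraph.Walk.cons h (p₁.append q₂)) ≠ 0
        · have h1 := ih u _ hl1 hz
          have h2' := walkWeight_nonneg hx (SimpleGraph.Walk.cons h2 q₁)
          linarith [hwt.ge]
        · push_neg at hz
          have hz2 : walkSum c (SimpleGraph.Walk.cons h2 q₁) ≠ 0 := by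
            intro h0
            rw [hsum, hz, h0, add_zero] at hs
            exact hs rfl
          have h1 := ih a _ hl2 hz2
          have h2' := walkWeight_nonneg hx (SimpleGraph.Walk.cons h (p₁.append q₂))
          linarith [hwt.ge]
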